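/- Let V be a vector space over a field F and let P = P₀P₁⋯P_ℓ be a decomposition, i.e. the Pᵢ mutually commute and there exist Qᵢ commuting with all P_j such that id_V = ∑ᵢ QᵢPⁱ with Pⁱ = ∏_{j≠i} P_j. Then the range of P equals the intersection of the ranges of the Pᵢ, and the kernel of P is the internal direct sum of the kernels of the Pᵢ. -/

import Mathlib

open LinearMap

private lemma aux_prod {M : Type*} [Monoid M] {n : ℕ} (f : Fin n → M)
    (hf : ∀ i j, Commute (f i) (f j)) (i : Fin n) :
    (List.ofFn f).prod = f i * (List.ofFn fun j => if j = i then (1:M) else f j).prod := by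
  set L := List.ofFn f with hL
  have hlen : L.length = n := List.length_ofFn
  have h1 : (List.ofFn fun j => if j = i then (1:M) else f j) = L.set i 1 := by
    apply List.ext_getElem (by simp [hlen])
    intro k h1k h2k
    simp only [List.getElem_ofFn, List.getElem_set, hL]
    by_cases hk : (i : ℕ) = k
    · simp [hk, Fin.ext_iff]
    · rw [if_neg hk, if_neg (by simp [Fin.ext_iff]; omega)]
  have h2 : L = L.set i (f i) := by
    apply List.ext_getElem (by simp)
    intro k h1k h2k
    simp only [List.getElem_set]
    by_cases hk : (i : ℕ) = k
    · rw [if_pos hk]; subst hk; simp [hL]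
    · rw [if_neg hk]
  have hT : Commute (f i) (L.take i).prod := by
    apply Commute.list_prod_right
    intro x hx
    obtain ⟨k, hk⟩ := List.mem_ofFn.mp (List.mem_of_mem_take hx)
    exact hk ▸ hf i k
  have hi : (i : ℕ) < L.length := by rw [hlen]; exact i.isLt
  rw [h1, List.prod_set, if_pos hi, mul_one]
  conv_lhs => rw [h2, List.prod_set, if_pos hi]
  rw [← hT.eq, mul_assoc]

/-- range and kernel of a decomposed operator. -/
theorem stmt2 {F : Type*} [Field F] {V : Type*} [AddCommGroup V] [Module F V]
    (ℓ : ℕ) (P Q : Fin (ℓ + 1) → Module.End F V)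
    (hPP : ∀ i j, P i * P j = P j * P i)
    (hPQ : ∀ i j, P i * Q j = Q j * P i)
    (Pt : Module.End F V) (hPt : Pt = (List.ofFn P).prod)
    (Pc : Fin (ℓ + 1) → Module.End F V)
    (hPc : ∀ i, Pc i = (List.ofFn fun j => if j = i then (1 : Module.End F V) else P j).prod)
    (hid : (1 : Module.End F V) = ∑ i, Q i * Pc i) :
    range Pt = ⨅ i, range (P i) ∧
    (∀ u ∈ ker Pt, ∃! w : Fin (ℓ + 1) → V,
      (∀ i, w i ∈ ker (P i)) ∧ u = ∑ i, w i) := by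
  -- Pt factors through each P i
  have hfac : ∀ i, Pt = P i * Pc i := by
    intro i; rw [hPt, hPc]; exact aux_prod P (fun i j => hPP i j) i
  -- Q commutes with products of P's and 1's
  have hQl : ∀ j (l : List (Module.End F V)),
      (∀ x ∈ l, x = 1 ∨ ∃ k, x = P k) → Commute (Q j) l.prod := by
    intro j l hl
    apply Commute.list_prod_right
    intro x hx
    rcases hl x hx with h | ⟨k, rfl⟩
    · subst h; exact Commute.one_right _
    · exact (hPQ k j).symm
  have hQPt : ∀ j, Commute (Q j) Pt := by
    intro j; rw [hPt]
    apply hQl; intro x hx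
    obtain ⟨k, hk⟩ := List.mem_ofFn.mp hx
    exact Or.inr ⟨k, hk.symm⟩
  have hQPc : ∀ j i, Commute (Q j) (Pc i) := by
    intro j i; rw [hPc]
    apply hQl; intro x hx
    obtain ⟨k, hk⟩ := List.mem_ofFn.mp hx
    rw [← hk]
    by_cases h : k = i
    · left; rw [if_pos h]
    · right; exact ⟨k, by rw [if_neg h]⟩
  -- P i commutes with Pc j for all i j
  have hPPc : ∀ i j, Commute (P i) (Pc j) := by
    intro i j; rw [hPc]
    apply Commute.list_prod_right
    intro x hx
    obtain ⟨k, hk⟩ := List.mem_ofFn.mp hx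
    rw [← hk]
    by_cases h : k = j
    · rw [if_pos h]; exact Commute.one_right _
    · rw [if_neg h]; exact hPP i k
  -- for j ≠ i, Pc j kills ker (P i): Pc j = R * P i
  have hkill : ∀ i j, j ≠ i → ∀ x : V, P i x = 0 → (Pc j) x = 0 := by
    intro i j hji x hx
    have g : Fin (ℓ + 1) → Module.End F V := fun k => if k = j then 1 else P k
    have hg : ∀ a b, Commute ((fun k => if k = j then (1 : Module.End F V) else P k) a)
        ((fun k => if k = j then (1 : Module.End F V) else P k) b) := by
      intro a b
      dsimp only
      split_ifs
      · exact Commute.one_left _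
      · exact Commute.one_left _
      · exact Commute.one_right _
      · exact hPP a b
    have h1 : Pc j = (if i = j then (1 : Module.End F V) else P i) *
        (List.ofFn fun k => if k = i then (1 : Module.End F V)
          else if k = j then 1 else P k).prod := by
      rw [hPc]; exact aux_prod _ hg i
    rw [if_neg (fun h => hji h.symm)] at h1
    set R := (List.ofFn fun k => if k = i then (1 : Module.End F V)
          else if k = j then 1 else P k).prod with hR
    have hcomm : Commute (P i) R := by
      rw [hR]
      apply Commute.list_prod_right
      intro x hx
      obtain ⟨k, hk⟩ := List.mem_ofFn.mp hx
      rw [← hk]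
      by_cases h : k = i
      · rw [if_pos h]; exact Commute.one_right _
      · by_cases h' : k = j
        · rw [if_neg h, if_pos h']; exact Commute.one_right _
        · rw [if_neg h, if_neg h']; exact hPP i k
    have : Pc j = R * P i := by rw [h1, hcomm.eq]
    rw [this, Module.End.mul_apply, hx, map_zero]
  constructor
  · -- range
    ext u
    simp only [Submodule.mem_iInf]
    constructor
    · rintro ⟨v, rfl⟩ i
      exact ⟨Pc i v, by rw [hfac i, Module.End.mul_apply]⟩
    · intro h
      choose v hv using fun i => h i
      refine ⟨∑ i, Q i (v i), ?_⟩
      have key : ∀ i, Pt (Q i (v i)) = (Q i * Pc i) u := by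
        intro i
        calc Pt (Q i (v i)) = (Pt * Q i) (v i) := rfl
          _ = (Q i * Pt) (v i) := by rw [(hQPt i).eq]
          _ = Q i (Pt (v i)) := rfl
          _ = Q i ((Pc i * P i) (v i)) := by rw [← (hPPc i i).eq, ← hfac i]
          _ = Q i (Pc i (P i (v i))) := rfl
          _ = (Q i * Pc i) u := by rw [hv i]; rfl
      calc Pt (∑ i, Q i (v i)) = ∑ i, Pt (Q i (v i)) := map_sum _ _ _
        _ = ∑ i, (Q i * Pc i) u := Finset.sum_congr rfl fun i _ => key i
        _ = (∑ i, Q i * Pc i) u := (LinearMap.sum_apply _ _ _).symm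
        _ = (1 : Module.End F V) u := by rw [← hid]
        _ = u := rfl
  · -- kernel
    intro u hu
    rw [LinearMap.mem_ker] at hu
    have hdecomp : ∀ x : V, x = ∑ i, Q i (Pc i (x)) := by
      intro x
      conv_lhs => rw [show x = (1 : Module.End F V) x from rfl, hid]
      rw [LinearMap.sum_apply]
      rfl
    refine ⟨fun i => Q i (Pc i u), ⟨?_, hdecomp u⟩, ?_⟩
    · intro i
      rw [LinearMap.mem_ker]
      calc P i (Q i (Pc i u)) = (P i * Q i * Pc i) u := rfl
        _ = (Q i * (P i * Pc i)) u := by rw [hPQ i i, mul_assoc]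
        _ = Q i (Pt u) := by rw [← hfac i]; rfl
        _ = 0 := by rw [hu, map_zero]
    · rintro w' ⟨hw1, hw2⟩
      funext i
      have hker : ∀ j, P j (w' j) = 0 := fun j => LinearMap.mem_ker.mp (hw1 j)
      have step1 : Pc i u = Pc i (w' i) := by
        rw [hw2, map_sum]
        rw [Finset.sum_eq_single i]
        · intro j _ hj
          exact hkill j i (Ne.symm hj) (w' j) (hker j)
        · intro h; exact absurd (Finset.mem_univ i) h
      have step2 : w' i = Q i (Pc i (w' i)) := by
        conv_lhs => rw [hdecomp (w' i)]
        rw [Finset.sum_eq_single i]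
        · intro j _ hj
          rw [hkill i j hj (w' i) (hker i), map_zero]
        · intro h; exact absurd (Finset.mem_univ i) h
      rw [step2, step1]
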